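/- Let each f_i be ζ-quasar-convex with respect to x* and L_i-smooth, assume interpolation holds, and let v be a sampling vector. Then SGD with the stochastic Polyak step size γ_k = (f_v(x^k) - f_v*)/(c‖∇f_v(x^k)‖²) with c > 1/(2ζ) satisfies min over i < K of E[f(x^i) - f*] ≤ (2c²/(2cζ - 1)) (L_max_cal/K) ‖x^0 - x*‖², where L_max_cal satisfies (1/(2L_max_cal))(f(x) - f*) ≤ E[(f_v(x) - f_v*)²/‖∇f_v(x)‖²]. -/

import Mathlib

open scoped RealInnerProductSpace
open Finset

/-- Extension of a finite index sequence to `ℕ → ι` by `default`. -/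
def sgdExt {ι : Type*} [Inhabited ι] (k : ℕ) (ω : Fin k → ι) : ℕ → ι :=
  fun m => if h : m < k then ω ⟨m, h⟩ else default

/-- Key one-step inequality for the Polyak step. -/
lemma sps_step {E : Type*} [NormedAddCommGroup E] [InnerProductSpace ℝ E]
    (c α ζ D : ℝ) (g y xstar : E) (hc0 : 0 < c) (hα : 0 < 2*c*ζ - 1)
    (hαdef : α = (2*c*ζ-1)/c^2)
    (hD : 0 ≤ D) (hq : ζ * D ≤ ⟪g, y - xstar⟫) :
    ‖(y - (D / (c * ‖g‖ ^ 2)) • g) - xstar‖ ^ 2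
      ≤ ‖y - xstar‖ ^ 2 - α * (D ^ 2 / ‖g‖ ^ 2) := by
  by_cases hN : ‖g‖ = 0
  · have hg0 : g = 0 := norm_eq_zero.mp hN
    simp [hg0, hN]
  · have hNpos : 0 < ‖g‖ ^ 2 := by positivity
    have hexp : ‖(y - (D / (c * ‖g‖ ^ 2)) • g) - xstar‖ ^ 2
        = ‖y - xstar‖ ^ 2 - 2 * (D / (c * ‖g‖ ^ 2)) * ⟪g, y - xstar⟫
          + (D / (c * ‖g‖ ^ 2)) ^ 2 * ‖g‖ ^ 2 := by
      rw [sub_right_comm, norm_sub_sq_real, real_inner_smul_right, real_inner_comm,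
        norm_smul, mul_pow, Real.norm_eq_abs, sq_abs]
      ring
    rw [hexp]
    have hγnn : 0 ≤ D / (c * ‖g‖ ^ 2) := by positivity
    have h1 : ‖y - xstar‖ ^ 2 - 2 * (D / (c * ‖g‖ ^ 2)) * ⟪g, y - xstar⟫
          + (D / (c * ‖g‖ ^ 2)) ^ 2 * ‖g‖ ^ 2
        ≤ ‖y - xstar‖ ^ 2 - 2 * (D / (c * ‖g‖ ^ 2)) * (ζ * D)
          + (D / (c * ‖g‖ ^ 2)) ^ 2 * ‖g‖ ^ 2 := by nlinarith
    refine h1.trans (le_of_eq ?_)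
    rw [hαdef]
    field_simp
    ring

/-- Decomposition of a sum over `Fin (k+1) → ι` into a double sum. -/
lemma sgd_sum_snoc {ι : Type*} [Fintype ι] [Inhabited ι] (p : ι → ℝ) (k : ℕ)
    (g : (ℕ → ι) → ℝ) :
    ∑ ω : Fin (k+1) → ι, (∏ s, p (ω s)) * g (sgdExt (k+1) ω)
      = ∑ ω : Fin k → ι, ∑ j : ι,
          ((∏ s, p (ω s)) * p j) * g (sgdExt (k+1) (Fin.snoc ω j)) := by
  rw [← Fintype.sum_equiv (Fin.snocEquiv (fun _ : Fin (k+1) => ι))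
    (fun q : ι × (Fin k → ι) =>
      ((∏ s, p (q.2 s)) * p q.1) * g (sgdExt (k+1) (Fin.snoc q.2 q.1)))
    (fun ω : Fin (k+1) → ι => (∏ s, p (ω s)) * g (sgdExt (k+1) ω)) ?_]
  · rw [Fintype.sum_prod_type]
    exact Finset.sum_comm
  · intro q
    have h1 : (Fin.snocEquiv (fun _ : Fin (k+1) => ι)) q = Fin.snoc q.2 q.1 := by
      funext i; rfl
    rw [h1]
    congr 1
    rw [Fin.prod_univ_castSucc]
    simp

lemma sgdExt_last {ι : Type*} [Inhabited ι] (k : ℕ) (ω : Fin k → ι) (j : ι) :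
    sgdExt (k+1) (Fin.snoc ω j) k = j := by
  have h2 : k < k + 1 := Nat.lt_succ_self k
  simp only [sgdExt, dif_pos h2]
  have : (⟨k, h2⟩ : Fin (k+1)) = Fin.last k := rfl
  rw [this, Fin.snoc_last]

lemma sgdExt_agree {ι : Type*} [Inhabited ι] (k m : ℕ) (hm : m < k)
    (ω : Fin k → ι) (j : ι) :
    sgdExt k ω m = sgdExt (k+1) (Fin.snoc ω j) m := by
  have h2 : m < k + 1 := hm.trans (Nat.lt_succ_self k)
  simp only [sgdExt, dif_pos hm, dif_pos h2]
  have : (⟨m, h2⟩ : Fin (k+1)) = Fin.castSucc ⟨m, hm⟩ := rfl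
  rw [this, Fin.snoc_castSucc]

/-- SGD with the stochastic Polyak step size `γ_k = (f_v(x^k) - f_v*)/(c‖∇f_v(x^k)‖²)`,
`c > 1/(2ζ)`, on an interpolated average of `ζ`-quasar-convex `Lᵢ`-smooth functions satisfies
`min_{i<K} E[f(x^i) - f*] ≤ (2c²/(2cζ-1)) (𝓛_max/K) ‖x⁰ - x*‖²`. -/
theorem sgd_sps_quasar_convex
    {E : Type*} [NormedAddCommGroup E] [InnerProductSpace ℝ E]
    (n : ℕ) (hn : 0 < n)
    {ι : Type*} [Fintype ι] [Inhabited ι] (p : ι → ℝ) (v : ι → Fin n → ℝ)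
    (hp0 : ∀ j, 0 ≤ p j) (hp1 : ∑ j, p j = 1)
    (hv0 : ∀ j i, 0 ≤ v j i) (hv1 : ∀ i, (∑ j, p j * v j i) = 1)
    (fi : Fin n → E → ℝ) (gradfi : Fin n → E → E) (Li : Fin n → ℝ)
    (f : E → ℝ) (fv : ι → E → ℝ) (gradfv : ι → E → E)
    (ζ c Lm : ℝ) (xstar x0 : E)
    (hζ0 : 0 < ζ) (hζ1 : ζ ≤ 1) (hc : c > 1 / (2 * ζ)) (hLm : 0 < Lm)
    (hf : ∀ x, f x = (1 / (n : ℝ)) * ∑ i, fi i x)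
    (hfv : ∀ j x, fv j x = (1 / (n : ℝ)) * ∑ i, v j i * fi i x)
    (hgfv : ∀ j x, gradfv j x = (1 / (n : ℝ)) • ∑ i, v j i • gradfi i x)
    (hLi : ∀ i, 0 < Li i)
    (hsmooth : ∀ i (x z : E),
        fi i z - fi i x ≤ ⟪gradfi i x, z - x⟫ + Li i / 2 * ‖z - x‖ ^ 2)
    (hquasar : ∀ i (x : E), fi i xstar ≥ fi i x + (1 / ζ) * ⟪gradfi i x, xstar - x⟫)
    (hinterp : ∀ i (x : E), fi i xstar ≤ fi i x)
    (hLmax : ∀ x : E, 1 / (2 * Lm) * (f x - f xstar) ≤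
        ∑ j, p j * ((fv j x - fv j xstar) ^ 2 / ‖gradfv j x‖ ^ 2))
    (x : ℕ → (ℕ → ι) → E)
    (hx0 : ∀ ω, x 0 ω = x0)
    (hrec : ∀ k ω, x (k + 1) ω = x k ω -
        ((fv (ω k) (x k ω) - fv (ω k) xstar) / (c * ‖gradfv (ω k) (x k ω)‖ ^ 2)) •
          gradfv (ω k) (x k ω)) :
    ∀ K : ℕ, 0 < K → ∃ t < K,
      (∑ ω : Fin t → ι, (∏ s, p (ω s)) *
          (f (x t (fun m => if h : m < t then ω ⟨m, h⟩ else default)) - f xstar)) ≤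
        (2 * c ^ 2 / (2 * c * ζ - 1)) * (Lm / (K : ℝ)) * ‖x0 - xstar‖ ^ 2 := by
  have hζ2 : 0 < 2 * ζ := by positivity
  have hc0 : 0 < c := lt_trans (by positivity) hc
  have hα : 0 < 2 * c * ζ - 1 := by
    have h := (div_lt_iff₀ hζ2).mp hc
    nlinarith
  set α : ℝ := (2 * c * ζ - 1) / c ^ 2 with hαdef
  have hαpos : 0 < α := by positivity
  have hnn : (0:ℝ) < (n:ℝ) := by exact_mod_cast hn
  -- fv gap nonneg
  have hDnn : ∀ j y, 0 ≤ fv j y - fv j xstar := by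
    intro j y
    rw [hfv, hfv]
    have hs : ∑ i, v j i * fi i xstar ≤ ∑ i, v j i * fi i y :=
      Finset.sum_le_sum fun i _ => mul_le_mul_of_nonneg_left (hinterp i y) (hv0 j i)
    have hn' : (0:ℝ) ≤ 1 / (n:ℝ) := by positivity
    nlinarith
  -- quasar convexity of fv
  have hquasarv : ∀ j y, ζ * (fv j y - fv j xstar) ≤ ⟪gradfv j y, y - xstar⟫ := by
    intro j y
    have hterm : ∀ i, ζ * (fi i y - fi i xstar) ≤ ⟪gradfi i y, y - xstar⟫ := by
      intro i
      have h1 := hquasar i y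
      have h2 : (1/ζ) * ⟪gradfi i y, xstar - y⟫ ≤ fi i xstar - fi i y := by linarith
      have h3 : ⟪gradfi i y, xstar - y⟫ = -⟪gradfi i y, y - xstar⟫ := by
        rw [← inner_neg_right, neg_sub]
      rw [h3] at h2
      have h4 : (1/ζ) * (-⟪gradfi i y, y - xstar⟫) * ζ ≤ (fi i xstar - fi i y) * ζ :=
        mul_le_mul_of_nonneg_right h2 hζ0.le
      have h5 : (1/ζ) * (-⟪gradfi i y, y - xstar⟫) * ζ = -⟪gradfi i y, y - xstar⟫ := by
        field_simp
      nlinarith [h4, h5]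
    have hsum : ∑ i, v j i * (ζ * (fi i y - fi i xstar))
        ≤ ∑ i, v j i * ⟪gradfi i y, y - xstar⟫ :=
      Finset.sum_le_sum fun i _ => mul_le_mul_of_nonneg_left (hterm i) (hv0 j i)
    have hl : ζ * (fv j y - fv j xstar)
        = (1/(n:ℝ)) * ∑ i, v j i * (ζ * (fi i y - fi i xstar)) := by
      rw [hfv, hfv]
      rw [show ∑ i, v j i * (ζ * (fi i y - fi i xstar))
          = ζ * ((∑ i, v j i * fi i y) - ∑ i, v j i * fi i xstar) by
        rw [← Finset.sum_sub_distrib, Finset.mul_sum]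
        exact Finset.sum_congr rfl fun i _ => by ring]
      ring
    have hr : ⟪gradfv j y, y - xstar⟫
        = (1/(n:ℝ)) * ∑ i, v j i * ⟪gradfi i y, y - xstar⟫ := by
      rw [hgfv, real_inner_smul_left, sum_inner]
      congr 1
      exact Finset.sum_congr rfl fun i _ => real_inner_smul_left _ _ _
    rw [hl, hr]
    exact mul_le_mul_of_nonneg_left hsum (by positivity)
  -- interpolation for f
  have hfinterp : ∀ y, 0 ≤ f y - f xstar := by
    intro y
    rw [hf, hf]
    have hs : ∑ i, fi i xstar ≤ ∑ i, fi i y :=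
      Finset.sum_le_sum fun i _ => hinterp i y
    have hn' : (0:ℝ) ≤ 1 / (n:ℝ) := by positivity
    nlinarith
  -- dependence of x k only on indices < k
  have hdep : ∀ k (ω ω' : ℕ → ι), (∀ m, m < k → ω m = ω' m) → x k ω = x k ω' := by
    intro k
    induction k with
    | zero => intro ω ω' _; rw [hx0, hx0]
    | succ k ih =>
        intro ω ω' h
        rw [hrec, hrec, ih ω ω' (fun m hm => h m (hm.trans (Nat.lt_succ_self k))),
          h k (Nat.lt_succ_self k)]
  -- the recursion along extended sequences
  have hxsucc : ∀ k (ω : Fin k → ι) (j : ι),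
      x (k+1) (sgdExt (k+1) (Fin.snoc ω j)) =
        x k (sgdExt k ω) -
          ((fv j (x k (sgdExt k ω)) - fv j xstar) /
            (c * ‖gradfv j (x k (sgdExt k ω))‖ ^ 2)) • gradfv j (x k (sgdExt k ω)) := by
    intro k ω j
    have hxk : x k (sgdExt (k+1) (Fin.snoc ω j)) = x k (sgdExt k ω) :=
      hdep k _ _ (fun m hm => (sgdExt_agree k m hm ω j).symm)
    rw [hrec, sgdExt_last, hxk]
  set R : ℕ → ℝ := fun k =>
    ∑ ω : Fin k → ι, (∏ s, p (ω s)) * ‖x k (sgdExt k ω) - xstar‖ ^ 2 with hR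
  set F : ℕ → ℝ := fun k =>
    ∑ ω : Fin k → ι, (∏ s, p (ω s)) * (f (x k (sgdExt k ω)) - f xstar) with hF
  have hW : ∀ {k : ℕ} (ω : Fin k → ι), 0 ≤ ∏ s, p (ω s) :=
    fun ω => Finset.prod_nonneg fun s _ => hp0 _
  -- one-step expected descent
  have hRstep : ∀ k, R (k+1) ≤ R k - (α/(2*Lm)) * F k := by
    intro k
    have hdecomp : R (k+1) = ∑ ω : Fin k → ι, ∑ j : ι,
        ((∏ s, p (ω s)) * p j) *
          ‖x (k+1) (sgdExt (k+1) (Fin.snoc ω j)) - xstar‖ ^ 2 := by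
      rw [hR]
      exact sgd_sum_snoc p k (fun ω' => ‖x (k+1) ω' - xstar‖ ^ 2)
    rw [hdecomp]
    have hptwise : ∀ (ω : Fin k → ι),
        ∑ j : ι, ((∏ s, p (ω s)) * p j) *
            ‖x (k+1) (sgdExt (k+1) (Fin.snoc ω j)) - xstar‖ ^ 2
          ≤ (∏ s, p (ω s)) *
            (‖x k (sgdExt k ω) - xstar‖ ^ 2
              - α * ((1/(2*Lm)) * (f (x k (sgdExt k ω)) - f xstar))) := by
      intro ω
      set y := x k (sgdExt k ω) with hy
      have h1 : ∀ j : ι,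
          ‖x (k+1) (sgdExt (k+1) (Fin.snoc ω j)) - xstar‖ ^ 2
            ≤ ‖y - xstar‖ ^ 2 - α * ((fv j y - fv j xstar) ^ 2 / ‖gradfv j y‖ ^ 2) := by
        intro j
        rw [hxsucc k ω j]
        exact sps_step c α ζ (fv j y - fv j xstar) (gradfv j y) y xstar hc0 hα hαdef
          (hDnn j y) (hquasarv j y)
      have h2 : ∑ j : ι, ((∏ s, p (ω s)) * p j) *
            ‖x (k+1) (sgdExt (k+1) (Fin.snoc ω j)) - xstar‖ ^ 2
          ≤ ∑ j : ι, ((∏ s, p (ω s)) * p j) *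
            (‖y - xstar‖ ^ 2 - α * ((fv j y - fv j xstar) ^ 2 / ‖gradfv j y‖ ^ 2)) :=
        Finset.sum_le_sum fun j _ =>
          mul_le_mul_of_nonneg_left (h1 j) (mul_nonneg (hW ω) (hp0 j))
      refine h2.trans ?_
      have h3 : ∑ j : ι, ((∏ s, p (ω s)) * p j) *
            (‖y - xstar‖ ^ 2 - α * ((fv j y - fv j xstar) ^ 2 / ‖gradfv j y‖ ^ 2))
          = (∏ s, p (ω s)) *
            (‖y - xstar‖ ^ 2
              - α * ∑ j : ι, p j * ((fv j y - fv j xstar) ^ 2 / ‖gradfv j y‖ ^ 2)) := by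
        have h4 : ∑ j : ι, ((∏ s, p (ω s)) * p j) *
              (‖y - xstar‖ ^ 2 - α * ((fv j y - fv j xstar) ^ 2 / ‖gradfv j y‖ ^ 2))
            = (∑ j : ι, p j) * ((∏ s, p (ω s)) * ‖y - xstar‖ ^ 2)
              - (∏ s, p (ω s)) * α *
                ∑ j : ι, p j * ((fv j y - fv j xstar) ^ 2 / ‖gradfv j y‖ ^ 2) := by
          rw [Finset.sum_mul, Finset.mul_sum, ← Finset.sum_sub_distrib]
          exact Finset.sum_congr rfl fun j _ => by ring
        rw [h4, hp1]; ring
      rw [h3]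
      exact mul_le_mul_of_nonneg_left
        (sub_le_sub_left (mul_le_mul_of_nonneg_left (hLmax y) hαpos.le) _) (hW ω)
    have hsum2 : ∑ ω : Fin k → ι, ∑ j : ι,
          ((∏ s, p (ω s)) * p j) *
            ‖x (k+1) (sgdExt (k+1) (Fin.snoc ω j)) - xstar‖ ^ 2
        ≤ ∑ ω : Fin k → ι, (∏ s, p (ω s)) *
            (‖x k (sgdExt k ω) - xstar‖ ^ 2
              - α * ((1/(2*Lm)) * (f (x k (sgdExt k ω)) - f xstar))) :=
      Finset.sum_le_sum fun ω _ => hptwise ω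
    refine hsum2.trans (le_of_eq ?_)
    rw [hR, hF]
    simp only []
    rw [Finset.mul_sum, ← Finset.sum_sub_distrib]
    exact Finset.sum_congr rfl fun ω _ => by ring
  -- telescoping
  have htel : ∀ K : ℕ, R K + (α/(2*Lm)) * ∑ t ∈ Finset.range K, F t ≤ R 0 := by
    intro K
    induction K with
    | zero => simp
    | succ K ih =>
        rw [Finset.sum_range_succ]
        have h := hRstep K
        linarith
  have hR0 : R 0 = ‖x0 - xstar‖ ^ 2 := by
    rw [hR]
    simp only []
    rw [Fintype.sum_unique]
    simp [hx0]
  have hRnn : ∀ K : ℕ, 0 ≤ R K := by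
    intro K
    rw [hR]
    exact Finset.sum_nonneg fun ω _ => mul_nonneg (hW ω) (by positivity)
  -- conclusion
  intro K hK
  have hKpos : (0:ℝ) < (K:ℝ) := by exact_mod_cast hK
  obtain ⟨t, ht, hmin⟩ := Finset.exists_min_image (Finset.range K) F
    ⟨0, Finset.mem_range.mpr hK⟩
  refine ⟨t, Finset.mem_range.mp ht, ?_⟩
  have hsumF : (K:ℝ) * F t ≤ ∑ s ∈ Finset.range K, F s := by
    calc (K:ℝ) * F t = ∑ _s ∈ Finset.range K, F t := by
          rw [Finset.sum_const, Finset.card_range, nsmul_eq_mul]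
      _ ≤ ∑ s ∈ Finset.range K, F s := Finset.sum_le_sum fun s hs => hmin s hs
  have hbd : (α/(2*Lm)) * ∑ s ∈ Finset.range K, F s ≤ ‖x0 - xstar‖ ^ 2 := by
    have h := htel K
    have h0 := hRnn K
    rw [hR0] at h
    linarith
  have hβ : 0 < α/(2*Lm) := by positivity
  have hFt : F t ≤ ‖x0 - xstar‖ ^ 2 * (2*Lm/α) / K := by
    have h1 : (α/(2*Lm)) * ((K:ℝ) * F t) ≤ ‖x0 - xstar‖ ^ 2 :=
      le_trans (mul_le_mul_of_nonneg_left hsumF hβ.le) hbd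
    rw [div_mul_eq_mul_div, div_le_iff₀ (by positivity : (0:ℝ) < 2*Lm)] at h1
    have heq : ‖x0 - xstar‖ ^ 2 * (2*Lm/α) / (K:ℝ)
        = (‖x0 - xstar‖ ^ 2 * (2*Lm)) / (α * (K:ℝ)) := by
      field_simp
    rw [heq, le_div_iff₀ (by positivity : (0:ℝ) < α * (K:ℝ))]
    nlinarith [h1]
  have hgoal : (∑ ω : Fin t → ι, (∏ s, p (ω s)) *
      (f (x t (fun m => if h : m < t then ω ⟨m, h⟩ else default)) - f xstar)) = F t := rfl
  rw [hgoal]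
  refine hFt.trans (le_of_eq ?_)
  rw [hαdef]
  field_simp
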